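/- A set E ⊆ ℕ is an I₀ set if and only if every two disjoint subsets A, B of E are separable by some rotation. -/

import Mathlib

/-- A sequence `ψ : ℕ → ℂ` is almost periodic if it is a uniform limit of
trigonometric polynomials. -/
def AlmostPeriodic (ψ : ℕ → ℂ) : Prop :=
  ∀ ε : ℝ, 0 < ε → ∃ (m : ℕ) (c : Fin m → ℂ) (α : Fin m → ℝ),
    ∀ n : ℕ, ‖ψ n - ∑ j, c j * Complex.exp (2 * (Real.pi : ℂ) * Complex.I * (n : ℂ) * (α j : ℂ))‖ < ε

/-- A set `E ⊆ ℕ` is an `I₀` set if every bounded function on `E` extends to an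
almost periodic sequence on `ℕ`. -/
def IsI0Set (E : Set ℕ) : Prop :=
  ∀ b : ℕ → ℂ, (∃ C : ℝ, ∀ n ∈ E, ‖b n‖ ≤ C) →
    ∃ ψ : ℕ → ℂ, AlmostPeriodic ψ ∧ ∀ r ∈ E, ψ r = b r

/-- Two sets `A, B ⊆ ℕ` are separable by some rotation if there are `d ∈ ℕ` and
`α ∈ (ℝ/ℤ)^d` such that the closures of `Aα` and `Bα` in `(ℝ/ℤ)^d` are disjoint. -/
def SeparableByRotation (A B : Set ℕ) : Prop :=
  ∃ (d : ℕ) (α : Fin d → AddCircle (1 : ℝ)),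
    Disjoint (closure ((fun a : ℕ => a • α) '' A)) (closure ((fun b : ℕ => b • α) '' B))


open Complex Real BoundedContinuousFunction Set
open scoped Classical Pointwise

noncomputable section

attribute [local instance] ZeroLEOneClass.factZeroLtOne

noncomputable section

lemma key_exp (n : ℕ) (α : ℝ) :
    (AddCircle.toCircle ((n : ℕ) • (↑α : AddCircle (1:ℝ))) : ℂ)
      = Complex.exp (2 * (π:ℂ) * Complex.I * (n:ℂ) * (α:ℂ)) := by
  rw [← AddCircle.coe_nsmul, AddCircle.toCircle_apply_mk, Circle.coe_exp]
  congr 1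
  push_cast
  ring

abbrev PSpace : Type := (AddCircle (1:ℝ)) → AddCircle (1:ℝ)

def Phi : ℕ → PSpace := fun n a => n • a

def PhiC : C(ℕ, PSpace) := ⟨Phi, continuous_of_discreteTopology⟩

def eChar (α : ℝ) : ℕ →ᵇ ℂ :=
  BoundedContinuousFunction.ofNormedAddCommGroup
    (fun n => Complex.exp (2 * (π:ℂ) * Complex.I * (n:ℂ) * (α:ℂ)))
    continuous_of_discreteTopology 1 (fun n => by
      have h : (2 * (π:ℂ) * Complex.I * (n:ℂ) * (α:ℂ)) = ((2*π*n*α : ℝ):ℂ) * Complex.I := by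
        push_cast; ring
      rw [h, Complex.norm_exp_ofReal_mul_I])

@[simp] lemma eChar_apply (α : ℝ) (n : ℕ) :
    eChar α n = Complex.exp (2 * (π:ℂ) * Complex.I * (n:ℂ) * (α:ℂ)) := rfl

lemma eChar_mul (α β : ℝ) : eChar α * eChar β = eChar (α + β) := by
  ext n
  simp only [BoundedContinuousFunction.mul_apply, eChar_apply, ← Complex.exp_add]
  congr 1
  push_cast
  ring

lemma eChar_zero : eChar 0 = 1 := by
  ext n
  simp [eChar_apply]

lemma eChar_star (α : ℝ) : star (eChar α) = eChar (-α) := by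
  ext n
  simp only [BoundedContinuousFunction.star_apply, eChar_apply, RCLike.star_def]
  rw [← Complex.exp_conj]
  congr 1
  simp only [map_mul, Complex.conj_I, Complex.conj_ofNat, map_ofNat]
  push_cast
  simp [Complex.conj_ofReal]

def TrigSpan : Submodule ℂ (ℕ →ᵇ ℂ) := Submodule.span ℂ (Set.range eChar)

def TrigAlg : StarSubalgebra ℂ (ℕ →ᵇ ℂ) where
  carrier := TrigSpan
  add_mem' := fun ha hb => add_mem ha hb
  zero_mem' := zero_mem _
  mul_mem' := by
    intro a b ha hb
    have h : a * b ∈ TrigSpan * TrigSpan := Submodule.mul_mem_mul ha hb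
    have h2 : TrigSpan * TrigSpan = Submodule.span ℂ (Set.range eChar * Set.range eChar) := by
      rw [TrigSpan, Submodule.span_mul_span]
    rw [h2] at h
    refine Submodule.span_le.mpr ?_ h
    rintro _ ⟨_, ⟨α, rfl⟩, _, ⟨β, rfl⟩, rfl⟩
    exact Submodule.subset_span ⟨α + β, (eChar_mul α β).symm⟩
  one_mem' := Submodule.subset_span ⟨0, eChar_zero⟩
  algebraMap_mem' := fun c => by
    have : algebraMap ℂ (ℕ →ᵇ ℂ) c = c • 1 := Algebra.algebraMap_eq_smul_one c
    rw [this]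
    exact Submodule.smul_mem _ _ (Submodule.subset_span ⟨0, eChar_zero⟩)
  star_mem' := by
    intro a ha
    induction ha using Submodule.span_induction with
    | mem x hx => obtain ⟨α, rfl⟩ := hx; exact Submodule.subset_span ⟨-α, (eChar_star α).symm⟩
    | zero => simpa using zero_mem TrigSpan
    | add x y _ _ hx hy => rw [star_add]; exact add_mem hx hy
    | smul c x _ hx => rw [star_smul]; exact Submodule.smul_mem _ _ hx

lemma almostPeriodic_of_mem (f : ℕ →ᵇ ℂ) (hf : f ∈ TrigAlg.topologicalClosure) :
    AlmostPeriodic ⇑f := by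
  intro ε hε
  have hf' : f ∈ closure (TrigSpan : Set (ℕ →ᵇ ℂ)) := hf
  obtain ⟨g, hg, hdist⟩ := Metric.mem_closure_iff.mp hf' ε hε
  obtain ⟨co, rfl⟩ := Finsupp.mem_span_range_iff_exists_finsupp.mp hg
  set m := co.support.card
  set e : Fin m ≃ {x // x ∈ co.support} := co.support.equivFin.symm
  refine ⟨m, fun j => co (e j), fun j => (e j : ℝ), fun n => ?_⟩
  have hgn : (co.sum fun α a => a • eChar α) n
      = ∑ j : Fin m, co (e j) * Complex.exp (2 * (π:ℂ) * Complex.I * (n:ℂ) * ((e j : ℝ):ℂ)) := by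
    rw [Finsupp.sum]
    rw [BoundedContinuousFunction.coe_sum]
    simp only [Finset.sum_apply, BoundedContinuousFunction.coe_smul, Pi.smul_apply, eChar_apply,
      smul_eq_mul]
    rw [← Finset.sum_attach co.support (fun a => co a * Complex.exp (2 * (π:ℂ) * Complex.I * (n:ℂ) * ((a:ℝ):ℂ)))]
    exact (Equiv.sum_comp e _).symm
  rw [← hgn]
  calc ‖f n - (co.sum fun α a => a • eChar α) n‖
      = dist (f n) ((co.sum fun α a => a • eChar α) n) := (dist_eq_norm _ _).symm
    _ ≤ dist f (co.sum fun α a => a • eChar α) := dist_coe_le_dist n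
    _ < ε := hdist

def chi (a : AddCircle (1:ℝ)) : C(PSpace, ℂ) :=
  ⟨fun x => (AddCircle.toCircle (x a) : ℂ),
    continuous_subtype_val.comp (AddCircle.continuous_toCircle.comp (continuous_apply a))⟩

def rho : C(PSpace, ℂ) →⋆ₐ[ℂ] (ℕ →ᵇ ℂ) where
  toFun F := (mkOfCompact F).compContinuous PhiC
  map_one' := by ext n; rfl
  map_mul' F G := by ext n; rfl
  map_zero' := by ext n; rfl
  map_add' F G := by ext n; rfl
  commutes' c := by ext n; rfl
  map_star' F := by ext n; rfl

lemma rho_continuous : Continuous (rho : C(PSpace, ℂ) → (ℕ →ᵇ ℂ)) := by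
  have h1 : LipschitzWith 1 (fun f : PSpace →ᵇ ℂ => f.compContinuous PhiC) :=
    BoundedContinuousFunction.lipschitz_compContinuous PhiC
  have h2 : Isometry (mkOfCompact : C(PSpace, ℂ) → PSpace →ᵇ ℂ) :=
    Isometry.of_dist_eq fun f g => BoundedContinuousFunction.dist_mkOfCompact f g
  exact h1.continuous.comp h2.continuous

lemma rho_chi (α : ℝ) : rho (chi (↑α : AddCircle (1:ℝ))) = eChar α := by
  ext n
  show (AddCircle.toCircle ((Phi n) ↑α) : ℂ) = _
  rw [eChar_apply, ← key_exp]
  rfl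

lemma rho_mem (F : C(PSpace, ℂ)) : rho F ∈ TrigAlg.topologicalClosure := by
  have hsep : (StarAlgebra.adjoin ℂ (Set.range chi)).SeparatesPoints := by
    intro x y hxy
    obtain ⟨a, ha⟩ := Function.ne_iff.mp hxy
    refine ⟨chi a, ⟨chi a, StarAlgebra.subset_adjoin ℂ _ ⟨a, rfl⟩, rfl⟩, ?_⟩
    simp only [chi, ContinuousMap.coe_mk]
    exact fun h => ha (AddCircle.injective_toCircle one_ne_zero (Subtype.coe_injective h))
  have htop := ContinuousMap.starSubalgebra_topologicalClosure_eq_top_of_separatesPoints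
    (StarAlgebra.adjoin ℂ (Set.range chi)) hsep
  have hle : StarAlgebra.adjoin ℂ (Set.range chi)
      ≤ (TrigAlg.topologicalClosure).comap rho := by
    refine StarAlgebra.adjoin_le ?_
    rintro _ ⟨a, rfl⟩
    obtain ⟨α, rfl⟩ := QuotientAddGroup.mk_surjective a
    show rho (chi ↑α) ∈ TrigAlg.topologicalClosure
    rw [rho_chi]
    exact TrigAlg.le_topologicalClosure (Submodule.subset_span ⟨α, rfl⟩)
  have hclosed : IsClosed (((TrigAlg.topologicalClosure).comap rho : StarSubalgebra ℂ C(PSpace, ℂ)) : Set C(PSpace, ℂ)) := by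
    have : (((TrigAlg.topologicalClosure).comap rho : StarSubalgebra ℂ C(PSpace, ℂ)) : Set C(PSpace, ℂ))
        = rho ⁻¹' (TrigAlg.topologicalClosure : Set (ℕ →ᵇ ℂ)) := rfl
    rw [this]
    exact (TrigAlg.isClosed_topologicalClosure).preimage rho_continuous
  have : (StarAlgebra.adjoin ℂ (Set.range chi)).topologicalClosure
      ≤ (TrigAlg.topologicalClosure).comap rho :=
    StarSubalgebra.topologicalClosure_minimal hle hclosed
  rw [htop] at this
  exact this (by trivial)

lemma sep_closures {A B : Set ℕ} (h : SeparableByRotation A B) :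
    Disjoint (closure (Phi '' A)) (closure (Phi '' B)) := by
  obtain ⟨d, α, hd⟩ := h
  set pr : PSpace → (Fin d → AddCircle (1:ℝ)) := fun x k => x (α k) with hpr
  have hprc : Continuous pr := continuous_pi fun k => continuous_apply (α k)
  have him : ∀ S : Set ℕ, pr '' (Phi '' S) = (fun a : ℕ => a • α) '' S := by
    intro S
    rw [Set.image_image]
    rfl
  rw [Set.disjoint_left]
  intro x hxA hxB
  have h1 : pr x ∈ closure ((fun a : ℕ => a • α) '' A) := by
    rw [← him]
    exact (image_closure_subset_closure_image hprc) (Set.mem_image_of_mem pr hxA)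
  have h2 : pr x ∈ closure ((fun a : ℕ => a • α) '' B) := by
    rw [← him]
    exact (image_closure_subset_closure_image hprc) (Set.mem_image_of_mem pr hxB)
  exact Set.disjoint_left.mp hd h1 h2

lemma approx_cont (E : Set ℕ)
    (hsep : ∀ A B : Set ℕ, A ⊆ E → B ⊆ E → Disjoint A B → SeparableByRotation A B)
    (b : ℕ → ℂ) (C ε : ℝ) (hC : 0 ≤ C) (hb : ∀ n ∈ E, ‖b n‖ ≤ C) (hε : 0 < ε) :
    ∃ F : C(PSpace, ℂ), (∀ x, ‖F x‖ ≤ C) ∧ ∀ n ∈ E, ‖F (Phi n) - b n‖ ≤ 2 * ε := by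
  obtain ⟨t, htsub, htfin, hcover⟩ :=
    (isCompact_closedBall (0:ℂ) C).finite_cover_balls hε
  set tf := htfin.toFinset with htf
  set m := tf.card with hm
  set ct : Fin m → ℂ := fun i => (tf.equivFin.symm i : ℂ) with hct
  set Es : Fin m → Set ℕ := fun i =>
    {n | n ∈ E ∧ b n ∈ Metric.ball (ct i) ε ∧ ∀ j, j < i → b n ∉ Metric.ball (ct j) ε} with hEs
  have hEsub : ∀ i, Es i ⊆ E := fun i n hn => hn.1
  have hdisjE : ∀ i j, i ≠ j → Disjoint (Es i) (Es j) := by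
    intro i j hij
    rw [Set.disjoint_left]
    intro n hi hj
    rcases lt_or_gt_of_ne hij with h | h
    · exact hj.2.2 i h hi.2.1
    · exact hi.2.2 j h hj.2.1
  have hcoverE : ∀ n ∈ E, ∃ i, n ∈ Es i := by
    intro n hn
    have hball : b n ∈ ⋃ x ∈ t, Metric.ball x ε :=
      hcover (by simpa [Metric.mem_closedBall, dist_eq_norm] using hb n hn)
    have hS : ∃ i : Fin m, b n ∈ Metric.ball (ct i) ε := by
      obtain ⟨x, hxt, hxb⟩ := Set.mem_iUnion₂.mp hball
      refine ⟨tf.equivFin ⟨x, htfin.mem_toFinset.mpr hxt⟩, ?_⟩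
      simpa [hct, Equiv.symm_apply_apply] using hxb
    set S : Finset (Fin m) := Finset.univ.filter (fun i => b n ∈ Metric.ball (ct i) ε) with hSdef
    have hSne : S.Nonempty := ⟨hS.choose, Finset.mem_filter.mpr ⟨Finset.mem_univ _, hS.choose_spec⟩⟩
    obtain ⟨i₀, hi₀S, hi₀min⟩ := S.exists_min_image id hSne
    refine ⟨i₀, hn, by simpa [hSdef] using hi₀S, fun j hj hbj => ?_⟩
    have : i₀ ≤ j := hi₀min j (Finset.mem_filter.mpr ⟨Finset.mem_univ _, hbj⟩)
    exact absurd hj (not_lt.mpr this)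
  set v : Fin m → ℂ := fun i => if h : (Es i).Nonempty then b h.some else 0 with hv
  have hv_norm : ∀ i, ‖v i‖ ≤ C := by
    intro i
    simp only [hv]
    split
    · next h => exact hb _ (hEsub i h.some_mem)
    · simpa using hC
  have hv_close : ∀ i, ∀ n ∈ Es i, ‖v i - b n‖ ≤ 2 * ε := by
    intro i n hn
    have hne : (Es i).Nonempty := ⟨n, hn⟩
    simp only [hv]
    rw [dif_pos hne]
    have h1 : dist (b hne.some) (ct i) < ε := hne.some_mem.2.1
    have h2 : dist (b n) (ct i) < ε := hn.2.1
    calc ‖b hne.some - b n‖ = dist (b hne.some) (b n) := (dist_eq_norm _ _).symm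
      _ ≤ dist (b hne.some) (ct i) + dist (ct i) (b n) := dist_triangle _ _ _
      _ = dist (b hne.some) (ct i) + dist (b n) (ct i) := by rw [dist_comm (ct i)]
      _ ≤ ε + ε := by linarith
      _ = 2 * ε := by ring
  set X : Fin m → Set PSpace := fun i => closure (Phi '' Es i) with hX
  have hXclosed : ∀ i, IsClosed (X i) := fun i => isClosed_closure
  have hXdisj : ∀ i j, i ≠ j → Disjoint (X i) (X j) := fun i j hij =>
    sep_closures (hsep (Es i) (Es j) (hEsub i) (hEsub j) (hdisjE i j hij))
  set Y : Fin m → Set PSpace := fun i => ⋃ j ∈ ({i}ᶜ : Set (Fin m)), X j with hY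
  have hYclosed : ∀ i, IsClosed (Y i) :=
    fun i => Set.Finite.isClosed_biUnion (Set.toFinite _) (fun j _ => hXclosed j)
  have hXYdisj : ∀ i, Disjoint (Y i) (X i) := by
    intro i
    rw [hY]
    refine Set.disjoint_right.mpr fun x hx => ?_
    simp only [Set.mem_iUnion]
    rintro ⟨j, hj, hxj⟩
    exact Set.disjoint_left.mp (hXdisj j i hj) hxj hx
  have hus : ∀ i : Fin m, ∃ u : C(PSpace, ℝ),
      Set.EqOn u 0 (Y i) ∧ Set.EqOn u 1 (X i) ∧ ∀ x, u x ∈ Set.Icc (0:ℝ) 1 :=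
    fun i => exists_continuous_zero_one_of_isClosed (hYclosed i) (hXclosed i) (hXYdisj i)
  choose u hu0 hu1 _hu01 using hus
  set F₀ : C(PSpace, ℂ) :=
    ∑ i, v i • ((⟨Complex.ofReal, Complex.continuous_ofReal⟩ : C(ℝ, ℂ)).comp (u i)) with hF₀
  have hF₀X : ∀ i, ∀ x ∈ X i, F₀ x = v i := by
    intro i x hx
    rw [hF₀]
    rw [ContinuousMap.coe_sum, Finset.sum_apply]
    rw [Finset.sum_eq_single i]
    · simp [hu1 i hx]
    · intro j _ hji
      have hxY : x ∈ Y j := Set.mem_biUnion (by simp [Ne, hji.symm] : i ∈ ({j}ᶜ : Set (Fin m))) hx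
      simp [hu0 j hxY]
    · simp
  set ret : ℂ → ℂ := fun z => (C / max C ‖z‖) • z with hretdef
  have hret_cont : Continuous ret := by
    rcases hC.eq_or_lt with h | h
    · have : ret = fun _ => 0 := by
        funext z
        rw [hretdef]
        simp [← h]
      rw [this]; exact continuous_const
    · exact (continuous_const.div (continuous_const.max continuous_norm)
        (fun z => (lt_max_iff.mpr (Or.inl h)).ne')).smul continuous_id
  have hret_eq : ∀ z : ℂ, ‖z‖ ≤ C → ret z = z := by
    intro z hz
    rw [hretdef]
    rcases hC.eq_or_lt with h | h
    · have hz0 : z = 0 := norm_le_zero_iff.mp (by rw [← h] at hz; exact hz)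
      simp [hz0]
    · simp only
      rw [max_eq_left hz, div_self h.ne', one_smul]
  have hret_le : ∀ z : ℂ, ‖ret z‖ ≤ C := by
    intro z
    rcases le_or_gt ‖z‖ C with h | h
    · rw [hret_eq z h]; exact h
    · rw [hretdef]
      simp only
      rw [max_eq_right h.le, norm_smul]
      have hz : 0 < ‖z‖ := hC.trans_lt h
      rw [Real.norm_eq_abs, _root_.abs_of_nonneg (div_nonneg hC hz.le), div_mul_cancel₀ _ hz.ne']
  refine ⟨(⟨ret, hret_cont⟩ : C(ℂ, ℂ)).comp F₀, fun x => hret_le _, fun n hn => ?_⟩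
  obtain ⟨i, hi⟩ := hcoverE n hn
  have hxX : Phi n ∈ X i := subset_closure (Set.mem_image_of_mem Phi hi)
  have : ((⟨ret, hret_cont⟩ : C(ℂ, ℂ)).comp F₀) (Phi n) = v i := by
    rw [ContinuousMap.comp_apply, hF₀X i _ hxX]
    exact hret_eq _ (hv_norm i)
  rw [this]
  exact hv_close i n hi

lemma approx_bcf (E : Set ℕ)
    (hsep : ∀ A B : Set ℕ, A ⊆ E → B ⊆ E → Disjoint A B → SeparableByRotation A B)
    (b : ℕ → ℂ) (C ε : ℝ) (hC : 0 ≤ C) (hb : ∀ n ∈ E, ‖b n‖ ≤ C) (hε : 0 < ε) :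
    ∃ g : ℕ →ᵇ ℂ, g ∈ TrigAlg.topologicalClosure ∧ ‖g‖ ≤ C ∧
      ∀ n ∈ E, ‖b n - g n‖ ≤ 2 * ε := by
  obtain ⟨F, hF1, hF2⟩ := approx_cont E hsep b C ε hC hb hε
  refine ⟨rho F, rho_mem F, ?_, ?_⟩
  · exact (BoundedContinuousFunction.norm_le hC).mpr fun n => hF1 (Phi n)
  · intro n hn
    rw [norm_sub_rev]
    exact hF2 n hn

theorem reverse (E : Set ℕ)
    (hsep : ∀ A B : Set ℕ, A ⊆ E → B ⊆ E → Disjoint A B → SeparableByRotation A B) :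
    IsI0Set E := by
  intro b ⟨C, hCb⟩
  set C₀ : ℝ := max C 0 + 1 with hC₀def
  have hC₀pos : 0 < C₀ := by positivity
  have hb : ∀ n ∈ E, ‖b n‖ ≤ C₀ := fun n hn =>
    (hCb n hn).trans ((le_max_left C 0).trans (by linarith))
  set D : ℕ → ℝ := fun k => C₀ * (1/2)^k with hD
  have hDpos : ∀ k, 0 < D k := fun k => by positivity
  have hDhalf : ∀ k, 2 * (D k / 4) = D (k+1) := by
    intro k
    rw [hD]
    dsimp only
    rw [pow_succ]
    ring
  set pick : (ℕ → ℂ) → ℕ → (ℕ →ᵇ ℂ) := fun q k =>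
    if h : ∀ n ∈ E, ‖q n‖ ≤ D k then
      (approx_bcf E hsep q (D k) (D k / 4) (hDpos k).le h (by positivity)).choose
    else 0 with hpick
  set q : ℕ → (ℕ → ℂ) := fun k => Nat.rec b (fun k qk => fun n => qk n - (pick qk k) n) k
    with hq
  set g : ℕ → (ℕ →ᵇ ℂ) := fun k => pick (q k) k with hg
  have hq0 : q 0 = b := rfl
  have hqsucc : ∀ k, q (k+1) = fun n => q k n - g k n := fun k => rfl
  have hinv : ∀ k, ∀ n ∈ E, ‖q k n‖ ≤ D k := by
    intro k
    induction k with
    | zero => simpa [hq0, hD] using hb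
    | succ k ih =>
      intro n hn
      have hspec := (approx_bcf E hsep (q k) (D k) (D k / 4) (hDpos k).le ih
        (by positivity)).choose_spec
      have hgk : g k = (approx_bcf E hsep (q k) (D k) (D k / 4) (hDpos k).le ih
          (by positivity)).choose := by
        rw [hg, hpick]
        simp only [dif_pos ih]
      rw [hqsucc k]
      dsimp only
      rw [← hDhalf k]
      rw [hgk]
      exact hspec.2.2 n hn
  have hgspec : ∀ k, g k ∈ TrigAlg.topologicalClosure ∧ ‖g k‖ ≤ D k ∧
      ∀ n ∈ E, ‖q k n - g k n‖ ≤ 2 * (D k / 4) := by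
    intro k
    have hspec := (approx_bcf E hsep (q k) (D k) (D k / 4) (hDpos k).le (hinv k)
      (by positivity)).choose_spec
    have hgk : g k = (approx_bcf E hsep (q k) (D k) (D k / 4) (hDpos k).le (hinv k)
        (by positivity)).choose := by
      rw [hg, hpick]
      simp only [dif_pos (hinv k)]
    rw [hgk]
    exact hspec
  have hsummable : Summable g := by
    refine Summable.of_norm_bounded ?_ fun k => (hgspec k).2.1
    exact (summable_geometric_two).mul_left C₀
  set ψ : ℕ →ᵇ ℂ := ∑' k, g k with hψ
  have hψsum : HasSum g ψ := hsummable.hasSum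
  have hψmem : ψ ∈ TrigAlg.topologicalClosure := by
    refine (TrigAlg.isClosed_topologicalClosure).mem_of_tendsto hψsum
      (Filter.Eventually.of_forall fun s => ?_)
    exact sum_mem fun k _ => (hgspec k).1
  refine ⟨⇑ψ, almostPeriodic_of_mem ψ hψmem, fun r hr => ?_⟩
  have heval : HasSum (fun k => g k r) (ψ r) :=
    (BoundedContinuousFunction.evalCLM (𝕜 := ℂ) r).hasSum hψsum
  have hpartial : ∀ K, ∑ k ∈ Finset.range K, g k r = b r - q K r := by
    intro K
    induction K with
    | zero => simp [hq0]
    | succ K ih =>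
      rw [Finset.sum_range_succ, ih, hqsucc K]
      ring
  have h1 : Filter.Tendsto (fun K => ∑ k ∈ Finset.range K, g k r) Filter.atTop (nhds (b r)) := by
    simp only [hpartial]
    have hq0lim : Filter.Tendsto (fun K => q K r) Filter.atTop (nhds 0) := by
      refine squeeze_zero_norm (fun K => hinv K r hr) ?_
      rw [hD]
      simpa using (tendsto_pow_atTop_nhds_zero_of_lt_one (by norm_num : (0:ℝ) ≤ 1/2)
        (by norm_num)).const_mul C₀
    simpa using (tendsto_const_nhds (x := b r)).sub hq0lim
  exact tendsto_nhds_unique heval.tendsto_sum_nat h1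


theorem forward_dir (E : Set ℕ) (hE : IsI0Set E) :
    ∀ A B : Set ℕ, A ⊆ E → B ⊆ E → Disjoint A B → SeparableByRotation A B := by
  intro A B hA hB hAB
  obtain ⟨ψ, hψAP, hψ⟩ := hE (fun n => if n ∈ A then 1 else 0)
    ⟨1, fun n _ => by split <;> simp⟩
  obtain ⟨m, c, α, hap⟩ := hψAP (1/4) (by norm_num)
  refine ⟨m, fun j => (↑(α j) : AddCircle (1:ℝ)), ?_⟩
  set F : ((Fin m → AddCircle (1:ℝ))) → ℂ :=
    fun x => ∑ j, c j * (AddCircle.toCircle (x j) : ℂ) with hF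
  have hFc : Continuous F := by
    refine continuous_finset_sum _ fun j _ => continuous_const.mul ?_
    exact continuous_subtype_val.comp (AddCircle.continuous_toCircle.comp (continuous_apply j))
  have hFn : ∀ n : ℕ, F ((fun a : ℕ => a • fun j => (↑(α j) : AddCircle (1:ℝ))) n)
      = ∑ j, c j * Complex.exp (2 * (π:ℂ) * Complex.I * (n:ℂ) * (α j : ℂ)) := by
    intro n
    simp only [hF, Pi.smul_apply]
    exact Finset.sum_congr rfl fun j _ => by rw [key_exp]
  have hclA : ∀ x ∈ closure ((fun a : ℕ => a • fun j => (↑(α j) : AddCircle (1:ℝ))) '' A),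
      ‖F x - 1‖ ≤ 1/4 := by
    intro x hx
    have hcl : IsClosed {x | ‖F x - 1‖ ≤ 1/4} :=
      isClosed_le (by continuity) continuous_const
    refine hcl.closure_subset_iff.mpr ?_ hx
    rintro _ ⟨a, ha, rfl⟩
    have h1 := hap a
    rw [hψ a (hA ha)] at h1
    simp only [if_pos ha] at h1
    simp only [Set.mem_setOf_eq]
    rw [hFn a, norm_sub_rev]
    exact h1.le
  have hclB : ∀ x ∈ closure ((fun a : ℕ => a • fun j => (↑(α j) : AddCircle (1:ℝ))) '' B),
      ‖F x‖ ≤ 1/4 := by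
    intro x hx
    have hcl : IsClosed {x | ‖F x‖ ≤ 1/4} :=
      isClosed_le (by continuity) continuous_const
    refine hcl.closure_subset_iff.mpr ?_ hx
    rintro _ ⟨a, ha, rfl⟩
    have h1 := hap a
    rw [hψ a (hB ha)] at h1
    have haA : a ∉ A := fun h => (hAB.ne_of_mem h ha) rfl
    simp only [if_neg haA, zero_sub, norm_neg] at h1
    simp only [Set.mem_setOf_eq]
    rw [hFn a]
    exact h1.le
  rw [Set.disjoint_left]
  intro x hxA hxB
  have h1 := hclA x hxA
  have h2 := hclB x hxB
  have : (1:ℝ) ≤ 1/2 := by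
    calc (1:ℝ) = ‖(1:ℂ)‖ := by simp
    _ = ‖(1 - F x) + F x‖ := by ring_nf
    _ ≤ ‖1 - F x‖ + ‖F x‖ := norm_add_le _ _
    _ = ‖F x - 1‖ + ‖F x‖ := by rw [norm_sub_rev]
    _ ≤ 1/4 + 1/4 := add_le_add h1 h2
    _ = 1/2 := by norm_num
  linarith

theorem isI0_iff_disjoint_subsets_separable (E : Set ℕ) :
    IsI0Set E ↔ ∀ A B : Set ℕ, A ⊆ E → B ⊆ E → Disjoint A B → SeparableByRotation A B :=
  ⟨forward_dir E, reverse E⟩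

end
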